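/- Let F be a field, S an F-vector space, and (U, V) a tiling of S such that U is projective. Suppose u_1, …, u_N are nonzero vectors of S, no two of which are proportional, such that U = ⋃_{i=1}^N F·u_i. Define the linear map h : F^N → S by h(c) = Σ_{i=1}^N c_i u_i and set C = h^{-1}(V). Let W = span(U) (the linear span), r = dim W, and V_U = V ∩ W. Then rank(C) = rank(V_U) + N − r, i.e., the dimension of the affine span of C in F^N equals the dimension of the affine span of V_U plus N − r. -/

import Mathlib

/-- `(U, V)` is a tiling of the ambient space `S`: every element of `S` is uniquely
represented as the sum of an element of `U` and an element of `V`. -/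
def IsTiling {S : Type*} [AddCommGroup S] (U V : Set S) : Prop :=
  ∀ s : S, ∃! p : S × S, p.1 ∈ U ∧ p.2 ∈ V ∧ p.1 + p.2 = s

/-- `U` is projective: `F·U = U`, i.e. `U` is closed under scalar multiplication. -/
def IsProjective (F : Type*) {S : Type*} [Field F] [AddCommGroup S] [Module F S]
    (U : Set S) : Prop :=
  ∀ (a : F) ⦃u : S⦄, u ∈ U → a • u ∈ U

/-- The rank of a subset of a vector space: the dimension of its affine span. -/
noncomputable def setRank (F : Type*) {S : Type*} [Field F] [AddCommGroup S] [Module F S]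
    (X : Set S) : ℕ :=
  Module.finrank F (affineSpan F X).direction

/-- The vector span of a preimage under a linear map is the comap of the vector span,
for a nonempty set contained in the range. -/
lemma vectorSpan_preimage {F M S : Type*} [Field F] [AddCommGroup M] [Module F M]
    [AddCommGroup S] [Module F S] (f : M →ₗ[F] S) (X : Set S)
    (hne : X.Nonempty) (hXr : X ⊆ LinearMap.range f) :
    vectorSpan F (f ⁻¹' X) = (vectorSpan F X).comap f := by
  set C : Set M := f ⁻¹' X with hCdef
  have himg : f '' (C -ᵥ C) = X -ᵥ X := by
    ext z
    constructor
    · rintro ⟨w, hw, rfl⟩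
      rcases Set.mem_vsub.mp hw with ⟨a, ha, b, hb, rfl⟩
      exact Set.mem_vsub.mpr ⟨f a, ha, f b, hb, by simp [vsub_eq_sub, map_sub]⟩
    · rintro hz
      rcases Set.mem_vsub.mp hz with ⟨x, hx, y, hy, rfl⟩
      rcases hXr hx with ⟨a, rfl⟩
      rcases hXr hy with ⟨b, rfl⟩
      exact ⟨a - b, Set.vsub_mem_vsub (by exact hx) (by exact hy), by
        simp [vsub_eq_sub, map_sub]⟩
  -- choose a base point in C
  obtain ⟨x0, hx0⟩ := hne
  obtain ⟨c0, rfl⟩ := hXr hx0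
  have hc0 : c0 ∈ C := hx0
  have hker : LinearMap.ker f ≤ Submodule.span F (C -ᵥ C) := by
    intro k hk
    have h1 : c0 + k ∈ C := by
      simp only [hCdef, Set.mem_preimage, map_add] at *
      simpa [LinearMap.mem_ker.mp hk] using hx0
    have : k ∈ C -ᵥ C := Set.mem_vsub.mpr ⟨c0 + k, h1, c0, hc0, by
      simp [vsub_eq_sub]⟩
    exact Submodule.subset_span this
  rw [vectorSpan_def, vectorSpan_def]
  apply le_antisymm
  · rw [Submodule.span_le]
    intro w hw
    rcases Set.mem_vsub.mp hw with ⟨a, ha, b, hb, rfl⟩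
    have : f (a -ᵥ b) ∈ X -ᵥ X := by
      rw [vsub_eq_sub, map_sub]
      exact Set.mem_vsub.mpr ⟨f a, ha, f b, hb, rfl⟩
    exact Submodule.mem_comap.mpr (Submodule.subset_span this)
  · intro m hm
    have hm' : f m ∈ Submodule.span F (X -ᵥ X) := hm
    rw [← himg, ← Submodule.map_span] at hm'
    rcases hm' with ⟨m', hm', hfm⟩
    have : m - m' ∈ LinearMap.ker f := by
      rw [LinearMap.mem_ker, map_sub, hfm, sub_self]
    have h2 : m - m' ∈ Submodule.span F (C -ᵥ C) := hker this
    have : m = m' + (m - m') := by abel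
    rw [this]
    exact Submodule.add_mem _ hm' h2

/-- Rank-nullity for the comap of a submodule contained in the range. -/
lemma finrank_comap_of_le_range {F M S : Type*} [Field F] [AddCommGroup M] [Module F M]
    [AddCommGroup S] [Module F S] [FiniteDimensional F M] (f : M →ₗ[F] S)
    (K : Submodule F S) (hK : K ≤ LinearMap.range f) :
    Module.finrank F (K.comap f) = Module.finrank F K + Module.finrank F (LinearMap.ker f) := by
  set g := f.domRestrict (K.comap f) with hg
  have hrange : LinearMap.range g = K := by
    rw [hg, LinearMap.range_domRestrict, Submodule.map_comap_eq, inf_eq_right.mpr hK]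
  have hkerle : LinearMap.ker f ≤ K.comap f := fun x hx => by
    simp [Submodule.mem_comap, LinearMap.mem_ker.mp hx]
  have hker : LinearMap.ker g = (LinearMap.ker f).comap (K.comap f).subtype := by
    rw [hg, LinearMap.ker_domRestrict]
  have e : LinearMap.ker g ≃ₗ[F] LinearMap.ker f :=
    hker ▸ Submodule.comapSubtypeEquivOfLe hkerle
  have := LinearMap.finrank_range_add_finrank_ker g
  rw [hrange, e.finrank_eq] at this
  exact this.symm ▸ rfl

theorem statement1 {F : Type*} [Field F] {S : Type*} [AddCommGroup S] [Module F S]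
    (U V : Set S) (hT : IsTiling U V) (hproj : IsProjective F U)
    {N : ℕ} (u : Fin N → S) (hu0 : ∀ i, u i ≠ 0)
    (hcol : ∀ i j : Fin N, i ≠ j → ∀ a : F, u i ≠ a • u j)
    (hU : U = ⋃ i, Set.range (fun a : F => a • u i))
    (C : Set (Fin N → F)) (hC : C = {c | (∑ i, c i • u i) ∈ V})
    (W : Submodule F S) (hW : W = Submodule.span F U)
    (r : ℕ) (hr : r = Module.finrank F W)
    (VU : Set S) (hVU : VU = V ∩ (W : Set S)) :
    setRank F C = setRank F VU + (N - r) := by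
  classical
  set f : (Fin N → F) →ₗ[F] S := Fintype.linearCombination F u with hf
  have hfapp : ∀ c : Fin N → F, f c = ∑ i, c i • u i := fun c => rfl
  -- range f = W
  have hrange : LinearMap.range f = W := by
    apply le_antisymm
    · rintro _ ⟨c, rfl⟩
      rw [hfapp]
      apply Submodule.sum_mem
      intro i _
      apply Submodule.smul_mem
      rw [hW]
      apply Submodule.subset_span
      rw [hU]
      exact Set.mem_iUnion.mpr ⟨i, 1, one_smul F (u i)⟩
    · rw [hW, Submodule.span_le]
      intro x hx
      rw [hU] at hx
      rcases Set.mem_iUnion.mp hx with ⟨i, a, rfl⟩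
      exact ⟨Pi.single i a, by simp [hf]⟩
  -- C = f ⁻¹' VU
  have hCV : C = f ⁻¹' VU := by
    ext c
    have hcW : f c ∈ W := hrange ▸ ⟨c, rfl⟩
    simp only [hC, hVU, Set.mem_setOf_eq, Set.mem_preimage, Set.mem_inter_iff, hfapp]
    exact ⟨fun h => ⟨h, hcW⟩, fun h => h.1⟩
  -- VU is nonempty
  have hVUne : VU.Nonempty := by
    obtain ⟨p, ⟨hpU, hpV, hps⟩, _⟩ := hT 0
    refine ⟨p.2, hVU ▸ ⟨hpV, ?_⟩⟩
    have hp1W : p.1 ∈ W := by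
      rw [hW]; exact Submodule.subset_span hpU
    have h2 : p.2 = -p.1 := eq_neg_of_add_eq_zero_right hps
    rw [h2]
    exact Submodule.neg_mem _ hp1W
  -- vectorSpan of VU is inside W = range f
  have hVUW : VU ⊆ (LinearMap.range f : Set S) := by
    rw [hrange]; rw [hVU]; exact Set.inter_subset_right
  have hKle : vectorSpan F VU ≤ LinearMap.range f := by
    rw [vectorSpan_def, Submodule.span_le]
    intro z hz
    rcases Set.mem_vsub.mp hz with ⟨x, hx, y, hy, rfl⟩
    rw [vsub_eq_sub]
    exact Submodule.sub_mem _ (hVUW hx) (hVUW hy)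
  -- compute ranks
  have hmain : vectorSpan F C = (vectorSpan F VU).comap f := by
    rw [hCV]
    exact vectorSpan_preimage f VU hVUne hVUW
  have hcomap := finrank_comap_of_le_range f (vectorSpan F VU) hKle
  -- kernel dimension
  have hrn := LinearMap.finrank_range_add_finrank_ker f
  rw [hrange, ← hr, Module.finrank_fin_fun] at hrn
  have hkerdim : Module.finrank F (LinearMap.ker f) = N - r := by omega
  unfold setRank
  rw [direction_affineSpan, direction_affineSpan, hmain, hcomap, hkerdim]
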